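/- Let C be a small category, F, G : Cᵒᵖ ⥤ Type presheaves on C, and φ : F ⟶ G a morphism of presheaves. Let c, d be objects of C, x an element of F(c), y an element of G(d), and f : c ⟶ d a morphism of C with G(f)(y) = φ_c(x), so that f determines a morphism (c, φ_c(x)) ⟶ (d, y) in the category of elements of G. Then the following are equivalent: (i) the pair ((c, x), f) is a universal arrow from the induced functor ∫φ : ∫F ⥤ ∫G on categories of elements to the object (d, y) of ∫G (equivalently, the corresponding object of the comma category (∫φ ↓ (d, y)) is terminal); (ii) the square of presheaves whose top edge is the Yoneda-classifying map x̃ : y(c) ⟶ F of x, whose left edge is y(f) : y(c) ⟶ y(d), whose right edge is φ : F ⟶ G, and whose bottom edge is the Yoneda-classifying map ỹ : y(d) ⟶ G of y, is a pullback square in the category of presheaves on C. -/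

import Mathlib

open CategoryTheory CategoryTheory.Limits Opposite

universe u

/-- The category of elements of a presheaf `F : Cᵒᵖ ⥤ Type u`, with objects pairs
`(c, x ∈ F(c))` and morphisms `(c, x) ⟶ (d, y)` the morphisms `f : c ⟶ d` of `C` with
`F(f)(y) = x`. -/
structure PElt {C : Type u} [SmallCategory C] (F : Cᵒᵖ ⥤ Type u) : Type u where
  base : C
  elt : F.obj (op base)

namespace PElt

variable {C : Type u} [SmallCategory C]

instance (F : Cᵒᵖ ⥤ Type u) : Category (PElt F) where
  Hom x y := { f : x.base ⟶ y.base // F.map f.op y.elt = x.elt }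
  id x := ⟨𝟙 x.base, by rw [op_id, FunctorToTypes.map_id_apply]⟩
  comp {x y z} f g := ⟨f.1 ≫ g.1, by rw [op_comp, FunctorToTypes.map_comp_apply, g.2, f.2]⟩
  id_comp f := Subtype.ext (Category.id_comp f.1)
  comp_id f := Subtype.ext (Category.comp_id f.1)
  assoc f g h := Subtype.ext (Category.assoc f.1 g.1 h.1)

/-- The functor `∫φ : ∫F ⥤ ∫G` on categories of elements induced by a morphism of
presheaves `φ : F ⟶ G`, sending `(c, x)` to `(c, φ_c(x))`. -/
def map {F G : Cᵒᵖ ⥤ Type u} (φ : F ⟶ G) : PElt F ⥤ PElt G where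
  obj x := ⟨x.base, φ.app _ x.elt⟩
  map {x y} f := ⟨f.1, by rw [← FunctorToTypes.naturality, f.2]⟩
  map_id _ := rfl
  map_comp _ _ := rfl

/-- The projection `π : ∫F ⥤ C` from the category of elements of a presheaf. -/
def proj (F : Cᵒᵖ ⥤ Type u) : PElt F ⥤ C where
  obj x := x.base
  map f := f.1
  map_id _ := rfl
  map_comp _ _ := rfl

theorem map_comp' {F G H : Cᵒᵖ ⥤ Type u} (φ : F ⟶ G) (ψ : G ⟶ H) :
    PElt.map (φ ≫ ψ) = PElt.map φ ⋙ PElt.map ψ := rfl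

end PElt

section Aux
variable {C : Type u} [SmallCategory C] {F G : Cᵒᵖ ⥤ Type u} (φ : F ⟶ G) {c d : C}
  (x : F.obj (op c)) (y : G.obj (op d)) (f : c ⟶ d)

theorem lemB (hf : G.map f.op y = φ.app (op c) x) :
    IsPullback (yonedaEquiv.symm x) (yoneda.map f) φ (yonedaEquiv.symm y) ↔
    ∀ (e : C) (a : F.obj (op e)) (h : e ⟶ d), G.map h.op y = φ.app (op e) a →
      ∃! g : e ⟶ c, F.map g.op x = a ∧ g ≫ f = h := by
  have w : yonedaEquiv.symm x ≫ φ = yoneda.map f ≫ yonedaEquiv.symm y := by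
    ext eo g
    change (yonedaEquiv.symm x ≫ φ).app eo g = (yoneda.map f ≫ yonedaEquiv.symm y).app eo g
    change φ.app eo (F.map g.op x) = G.map (g ≫ f).op y
    rw [FunctorToTypes.naturality, ← hf, op_comp, FunctorToTypes.map_comp_apply]
  constructor
  · intro hp e a h hh
    have hp' := ((evaluation Cᵒᵖ (Type u)).obj (op e)).map_isPullback hp
    obtain ⟨g, hg, hg'⟩ := ((PullbackCone.isLimitEquivBijective _) hp'.isLimit).existsUnique
      ⟨⟨a, h⟩, hh.symm⟩
    refine ⟨g, ⟨?_, ?_⟩, ?_⟩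
    · exact congrArg (fun z => z.1.1) hg
    · exact congrArg (fun z => z.1.2) hg
    · rintro g' ⟨h1, h2⟩
      exact hg' g' (Subtype.ext (Prod.ext h1 h2))
  · intro hP
    have ev : ∀ eo : Cᵒᵖ, IsLimit (PullbackCone.mk ((yonedaEquiv.symm x).app eo)
        ((yoneda.map f).app eo) (congr_app w eo)) := by
      intro eo
      refine (PullbackCone.isLimitEquivBijective _).symm ⟨?_, ?_⟩
      · intro g g' hgg
        obtain ⟨g0, _, hu⟩ := hP eo.unop (F.map g.op x) (g ≫ f)
          (show G.map (g ≫ f).op y = φ.app _ (F.map g.op x) from (congr_arg (fun k : (yoneda.obj c).obj eo ⟶ G.obj eo => k g) (congr_app w eo)).symm)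
        have e1 := hu g ⟨rfl, rfl⟩
        have e2 := hu g' ⟨(congrArg (fun z => z.1.1) hgg).symm,
          (congrArg (fun z => z.1.2) hgg).symm⟩
        rw [e1, e2]
      · rintro ⟨⟨a, h⟩, hz⟩
        obtain ⟨g, ⟨h1, h2⟩, -⟩ := hP eo.unop a h hz.symm
        exact ⟨g, Subtype.ext (Prod.ext h1 h2)⟩
    refine IsPullback.of_isLimit' ⟨w⟩ ?_
    apply evaluationJointlyReflectsLimits
    intro eo
    exact (isLimitMapConePullbackConeEquiv ((evaluation Cᵒᵖ (Type u)).obj eo) w).symm (ev eo)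

end Aux

section AuxA
variable {C : Type u} [SmallCategory C] {F G : Cᵒᵖ ⥤ Type u} (φ : F ⟶ G) {c d : C}
  (x : F.obj (op c)) (y : G.obj (op d)) (f : c ⟶ d)

theorem lemA (hf : G.map f.op y = φ.app (op c) x) :
    Nonempty (IsTerminal (CostructuredArrow.mk
      (S := PElt.map φ) (T := (⟨d, y⟩ : PElt G)) (Y := (⟨c, x⟩ : PElt F)) ⟨f, hf⟩)) ↔
    ∀ (e : C) (a : F.obj (op e)) (h : e ⟶ d), G.map h.op y = φ.app (op e) a →
      ∃! g : e ⟶ c, F.map g.op x = a ∧ g ≫ f = h := by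
  constructor
  · rintro ⟨ht⟩ e a h hh
    let A : CostructuredArrow (PElt.map φ) (⟨d, y⟩ : PElt G) :=
      CostructuredArrow.mk (Y := (⟨e, a⟩ : PElt F)) ⟨h, hh⟩
    let m := ht.from A
    refine ⟨m.left.1, ⟨m.left.2, congrArg Subtype.val (CostructuredArrow.w m)⟩, ?_⟩
    rintro g' ⟨h1, h2⟩
    let m' : A ⟶ CostructuredArrow.mk (S := PElt.map φ) (T := (⟨d, y⟩ : PElt G))
        (Y := (⟨c, x⟩ : PElt F)) ⟨f, hf⟩ :=
      CostructuredArrow.homMk ⟨g', h1⟩ (Subtype.ext h2)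
    exact congrArg (fun z => z.left.1) (ht.hom_ext m' m)
  · intro hP
    refine ⟨IsTerminal.ofUniqueHom (fun A => CostructuredArrow.homMk
      ⟨(hP A.left.base A.left.elt A.hom.1 A.hom.2).choose,
        (hP A.left.base A.left.elt A.hom.1 A.hom.2).choose_spec.1.1⟩
      (Subtype.ext (hP A.left.base A.left.elt A.hom.1 A.hom.2).choose_spec.1.2)) ?_⟩
    intro A m
    apply CostructuredArrow.hom_ext
    apply Subtype.ext
    exact (hP A.left.base A.left.elt A.hom.1 A.hom.2).choose_spec.2 m.left.1
      ⟨m.left.2, congrArg Subtype.val (CostructuredArrow.w m)⟩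

end AuxA

/-- For a morphism of presheaves `φ : F ⟶ G`, an element `x ∈ F(c)`, an element
`y ∈ G(d)` and `f : c ⟶ d` with `G(f)(y) = φ_c(x)`, the pair `((c, x), f)` is a universal
arrow from `∫φ` to `(d, y)` (i.e. the corresponding object of the comma category
`(∫φ ↓ (d, y))` is terminal) iff the classifying square of presheaves is a pullback. -/
theorem universal_arrow_iff_isPullback {C : Type u} [SmallCategory C]
    {F G : Cᵒᵖ ⥤ Type u} (φ : F ⟶ G) (c d : C) (x : F.obj (op c)) (y : G.obj (op d))
    (f : c ⟶ d) (hf : G.map f.op y = φ.app (op c) x) :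
    Nonempty (IsTerminal (CostructuredArrow.mk
      (S := PElt.map φ) (T := (⟨d, y⟩ : PElt G)) (Y := (⟨c, x⟩ : PElt F)) ⟨f, hf⟩)) ↔
    IsPullback (yonedaEquiv.symm x) (yoneda.map f) φ (yonedaEquiv.symm y) := by
  exact (lemA φ x y f hf).trans (lemB φ x y f hf).symm
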